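/- arXiv:1610.01526 — 2 statements merged into one kernel-verified Lean document; each statement's English description precedes it below -/
import Mathlib

section
/- Define φ(μ, σ²) = ∫ (1 + e^w)^{-1} (2πσ²)^{-1/2} exp(-(w-μ)²/(2σ²)) dw. Then φ satisfies the recursion φ(μ + σ², σ²) = e^{-μ - σ²/2} (1 - φ(μ, σ²)) for all μ ∈ R and σ² > 0. -/
open MeasureTheory Real

/-- The logistic-normal integral `φ(μ, σ²)`, written with the explicit
normal density with mean `m` and variance `s2`. -/
noncomputable def logisticNormal (m s2 : ℝ) : ℝ :=
  ∫ w, (1 + Real.exp w)⁻¹ *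
    ((Real.sqrt (2 * Real.pi * s2))⁻¹ * Real.exp (-((w - m) ^ 2) / (2 * s2)))

/-- Pirjol's recursion for the logistic-normal integral:
`φ(μ + σ², σ²) = e^{-μ - σ²/2} (1 - φ(μ, σ²))`. -/
theorem logisticNormal_recursion (m s2 : ℝ) (hs2 : 0 < s2) :
    logisticNormal (m + s2) s2 = Real.exp (-m - s2 / 2) * (1 - logisticNormal m s2) := by
  set v : NNReal := ⟨s2, hs2.le⟩ with hv
  have hvne : v ≠ 0 := by
    intro h
    exact hs2.ne' (congrArg Subtype.val h)
  have hvcoe : (v : ℝ) = s2 := rfl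
  have hpdf : ∀ μ : ℝ, ∀ x : ℝ, ProbabilityTheory.gaussianPDFReal μ v x
      = (Real.sqrt (2 * Real.pi * s2))⁻¹ * Real.exp (-((x - μ) ^ 2) / (2 * s2)) := by
    intro μ x
    rw [ProbabilityTheory.gaussianPDFReal, hvcoe]
  -- pointwise identity
  have key : ∀ w : ℝ, (1 + Real.exp w)⁻¹ * ProbabilityTheory.gaussianPDFReal (m + s2) v w
      = Real.exp (-m - s2 / 2) * (ProbabilityTheory.gaussianPDFReal m v w
        - (1 + Real.exp w)⁻¹ * ProbabilityTheory.gaussianPDFReal m v w) := by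
    intro w
    have h1 : (0:ℝ) < 1 + Real.exp w := by positivity
    have hexp : Real.exp (-((w - (m + s2)) ^ 2) / (2 * s2))
        = Real.exp (w - m - s2 / 2) * Real.exp (-((w - m) ^ 2) / (2 * s2)) := by
      rw [← Real.exp_add]
      congr 1
      field_simp
      ring
    have hne : (1 + Real.exp w) ≠ 0 := h1.ne'
    have h4 : Real.exp (-m - s2 / 2) * Real.exp w = Real.exp (w - m - s2 / 2) := by
      rw [← Real.exp_add]; ring_nf
    rw [hpdf, hpdf, hexp, ← h4]
    field_simp
    ring
  have hlog : ∀ μ : ℝ, logisticNormal μ s2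
      = ∫ w, (1 + Real.exp w)⁻¹ * ProbabilityTheory.gaussianPDFReal μ v w := by
    intro μ
    unfold logisticNormal
    simp only [hpdf]
  have hmeas : AEStronglyMeasurable (fun w : ℝ => (1 + Real.exp w)⁻¹)
      (volume : Measure ℝ) := by
    exact (Measurable.inv (by measurability)).aestronglyMeasurable
  have hbdd : ∃ C : ℝ, ∀ w : ℝ, ‖(1 + Real.exp w)⁻¹‖ ≤ C := by
    refine ⟨1, fun w => ?_⟩
    have h1 : (0:ℝ) < 1 + Real.exp w := by positivity
    rw [Real.norm_eq_abs, abs_of_pos (by positivity)]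
    rw [inv_le_one_iff₀]
    right
    linarith [Real.exp_pos w]
  have hint : ∀ μ : ℝ, Integrable
      (fun w : ℝ => (1 + Real.exp w)⁻¹ * ProbabilityTheory.gaussianPDFReal μ v w) := by
    intro μ
    exact (ProbabilityTheory.integrable_gaussianPDFReal μ v).bdd_mul hmeas (ae_of_all _ hbdd.choose_spec)
  rw [hlog, hlog]
  calc ∫ w, (1 + Real.exp w)⁻¹ * ProbabilityTheory.gaussianPDFReal (m + s2) v w
      = ∫ w, Real.exp (-m - s2 / 2) * (ProbabilityTheory.gaussianPDFReal m v w
        - (1 + Real.exp w)⁻¹ * ProbabilityTheory.gaussianPDFReal m v w) := by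
        congr 1; ext w; exact key w
    _ = Real.exp (-m - s2 / 2) * ∫ w, (ProbabilityTheory.gaussianPDFReal m v w
        - (1 + Real.exp w)⁻¹ * ProbabilityTheory.gaussianPDFReal m v w) := by
        rw [integral_const_mul]
    _ = Real.exp (-m - s2 / 2) * (1 - ∫ w, (1 + Real.exp w)⁻¹ *
        ProbabilityTheory.gaussianPDFReal m v w) := by
        rw [integral_sub (ProbabilityTheory.integrable_gaussianPDFReal m v) (hint m),
          ProbabilityTheory.integral_gaussianPDFReal_eq_one m hvne]
end

section
/- Let h(η) = 1/(1+e^{-η}) be the inverse logit function and U ~ N(0, σ²), σ² > 0. For each κ ∈ R let a(κ) be the unique real number satisfying E[h(κ + U + a(κ))] = h(κ). Then a(κ) > 0 when κ > 0, a(κ) < 0 when κ < 0, and a(0) = 0. -/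
open MeasureTheory ProbabilityTheory Real

/-- The inverse logit function `h(η) = 1/(1+e^{-η})`. -/
noncomputable def invLogit (η : ℝ) : ℝ := (1 + Real.exp (-η))⁻¹

lemma invLogit_pos (x : ℝ) : 0 < invLogit x := by
  unfold invLogit; positivity

lemma invLogit_le_one (x : ℝ) : invLogit x ≤ 1 := by
  unfold invLogit
  rw [inv_le_one_iff₀]
  right
  nlinarith [Real.exp_pos (-x)]

lemma invLogit_eq (x : ℝ) : invLogit x = Real.exp x / (1 + Real.exp x) := by
  unfold invLogit
  rw [Real.exp_neg, eq_div_iff (by positivity)]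
  field_simp
  ring

lemma invLogit_neg (x : ℝ) : invLogit (-x) = 1 - invLogit x := by
  rw [invLogit_eq, invLogit_eq, Real.exp_neg]
  have h := Real.exp_pos x
  field_simp
  ring

lemma invLogit_strictMono : StrictMono invLogit := by
  intro x y hxy
  unfold invLogit
  have h1 : (0:ℝ) < 1 + Real.exp (-x) := by positivity
  have h2 : (0:ℝ) < 1 + Real.exp (-y) := by positivity
  rw [inv_lt_inv₀ h1 h2]
  have := Real.exp_lt_exp.2 (neg_lt_neg hxy)
  linarith

lemma continuous_invLogit : Continuous invLogit :=
  (continuous_const.add (Real.continuous_exp.comp continuous_neg)).inv₀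
    (fun x => by show (1 + Real.exp (-x)) ≠ 0; positivity)

/-- Key algebraic inequality. -/
lemma pair_alg {x y z : ℝ} (hx : 0 < x) (hy : 0 < y) (hz : 1 < z)
    (hxyz : x * y = z ^ 2) (hne : x ≠ y) :
    x / (1 + x) + y / (1 + y) < 2 * (z / (1 + z)) := by
  have hz0 : 0 < z := by linarith
  have h1x : 0 < 1 + x := by linarith
  have h1y : 0 < 1 + y := by linarith
  have h1z : 0 < 1 + z := by linarith
  have hsq : 0 < (x - y) ^ 2 := by
    have h0 : x - y ≠ 0 := sub_ne_zero.2 hne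
    positivity
  have hsum : 2 * z < x + y := by nlinarith
  rw [div_add_div _ _ (ne_of_gt h1x) (ne_of_gt h1y), ← mul_div_assoc,
    div_lt_div_iff₀ (by positivity) h1z]
  nlinarith

/-- Pairing inequality for `κ > 0`. -/
lemma pair_lt {κ u : ℝ} (hκ : 0 < κ) (hu : u ≠ 0) :
    invLogit (κ + u) + invLogit (κ - u) < 2 * invLogit κ := by
  rw [invLogit_eq, invLogit_eq, invLogit_eq]
  apply pair_alg (Real.exp_pos _) (Real.exp_pos _)
  · nlinarith [Real.add_one_lt_exp (ne_of_gt hκ)]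
  · rw [← Real.exp_add, sq, ← Real.exp_add]
    congr 1
    ring
  · intro h
    have h2 := Real.exp_injective h
    have : u = 0 := by linarith
    exact hu this

variable {σ2 : NNReal}

lemma integrable_invLogit_shift (c : ℝ) (μ : Measure ℝ) [IsProbabilityMeasure μ] :
    Integrable (fun u => invLogit (u + c)) μ := by
  refine Integrable.mono' (integrable_const 1)
    ((continuous_invLogit.comp (continuous_id.add continuous_const)).aestronglyMeasurable)
    (Filter.Eventually.of_forall fun u => ?_)
  rw [Real.norm_eq_abs, abs_le]
  constructor
  · linarith [invLogit_pos (u + c)]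
  · exact invLogit_le_one _

lemma gaussian_map_neg (σ2 : NNReal) :
    (gaussianReal 0 σ2).map (fun x => -x) = gaussianReal 0 σ2 := by
  have h : (fun x : ℝ => -x) = ((-1 : ℝ) * ·) := by funext x; ring
  rw [h, gaussianReal_map_const_mul]
  congr 1
  · ring
  · ext
    push_cast
    norm_num

lemma integral_neg_gaussian (σ2 : NNReal) (f : ℝ → ℝ) (hf : Continuous f) :
    ∫ u, f (-u) ∂(gaussianReal 0 σ2) = ∫ u, f u ∂(gaussianReal 0 σ2) := by
  conv_rhs => rw [← gaussian_map_neg σ2]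
  rw [integral_map measurable_neg.aemeasurable hf.aestronglyMeasurable]

/-- Strict monotonicity of the adjusted mean in the shift. -/
lemma shifted_strictMono (κ : ℝ) (σ2 : NNReal) :
    StrictMono (fun t => ∫ u, invLogit (κ + u + t) ∂(gaussianReal 0 σ2)) := by
  intro b c hbc
  set μ := gaussianReal 0 σ2
  have hib : Integrable (fun u => invLogit (κ + u + b)) μ := by
    have := integrable_invLogit_shift (κ + b) μ
    simpa [add_comm, add_left_comm, add_assoc] using this
  have hic : Integrable (fun u => invLogit (κ + u + c)) μ := by
    have := integrable_invLogit_shift (κ + c) μ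
    simpa [add_comm, add_left_comm, add_assoc] using this
  have hlt : 0 < ∫ u, (invLogit (κ + u + c) - invLogit (κ + u + b)) ∂μ := by
    rw [integral_pos_iff_support_of_nonneg_ae]
    · have : Function.support (fun u => invLogit (κ + u + c) - invLogit (κ + u + b))
          = Set.univ := by
        ext u
        simp only [Function.mem_support, Set.mem_univ, iff_true]
        have := invLogit_strictMono (show κ + u + b < κ + u + c by linarith)
        intro h
        linarith
      rw [this]
      simp [μ]
    · exact Filter.Eventually.of_forall fun u =>
        le_of_lt (sub_pos.2 (invLogit_strictMono (show κ + u + b < κ + u + c by linarith)))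
    · exact hic.sub hib
  have := integral_sub hic hib
  simp only
  linarith [this ▸ hlt]

/-- For `κ > 0`, the unadjusted mean is strictly below `invLogit κ`. -/
lemma mean_lt (σ2 : NNReal) (hσ : σ2 ≠ 0) {κ : ℝ} (hκ : 0 < κ) :
    ∫ u, invLogit (κ + u + 0) ∂(gaussianReal 0 σ2) < invLogit κ := by
  set μ := gaussianReal 0 σ2 with hμ
  have hi : Integrable (fun u => invLogit (κ + u)) μ := by
    have := integrable_invLogit_shift κ μ
    simpa [add_comm] using this
  have hi' : Integrable (fun u => invLogit (κ - u)) μ := by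
    refine Integrable.mono' (integrable_const 1)
      ((continuous_invLogit.comp (continuous_const.sub continuous_id)).aestronglyMeasurable)
      (Filter.Eventually.of_forall fun u => ?_)
    rw [Real.norm_eq_abs, abs_le]
    exact ⟨by linarith [invLogit_pos (κ - u)], invLogit_le_one _⟩
  have hsym : ∫ u, invLogit (κ + u) ∂μ = ∫ u, invLogit (κ - u) ∂μ := by
    have := integral_neg_gaussian σ2 (fun u => invLogit (κ + u))
      (continuous_invLogit.comp (continuous_const.add continuous_id))
    simp only [← sub_eq_add_neg] at this
    exact this.symm
  have hpos : 0 < ∫ u, (2 * invLogit κ - (invLogit (κ + u) + invLogit (κ - u))) ∂μ := by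
    rw [integral_pos_iff_support_of_nonneg_ae]
    · have hsub : ({0}ᶜ : Set ℝ) ⊆ Function.support
          (fun u => 2 * invLogit κ - (invLogit (κ + u) + invLogit (κ - u))) := by
        intro u hu
        simp only [Set.mem_compl_iff, Set.mem_singleton_iff] at hu
        have := pair_lt hκ hu
        simp only [Function.mem_support]
        intro h
        linarith
      have h0 : μ ({0} : Set ℝ) = 0 :=
        gaussianReal_absolutelyContinuous 0 hσ (by simp)
      have h1 : μ ({0}ᶜ : Set ℝ) = 1 := by
        rw [measure_compl (measurableSet_singleton 0) (measure_ne_top _ _), h0]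
        simp [μ]
      calc (0 : ENNReal) < 1 := by norm_num
        _ = μ ({0}ᶜ : Set ℝ) := h1.symm
        _ ≤ _ := measure_mono hsub
    · refine Filter.Eventually.of_forall fun u => ?_
      simp only [Pi.zero_apply]
      rcases eq_or_ne u 0 with rfl | hu
      · simp only [add_zero, sub_zero]
        linarith
      · linarith [pair_lt hκ hu]
    · exact (integrable_const _).sub (hi.add hi')
  have hadd : Integrable (fun u => invLogit (κ + u) + invLogit (κ - u)) μ := hi.add hi'
  have hint : ∫ u, (2 * invLogit κ - (invLogit (κ + u) + invLogit (κ - u))) ∂μ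
      = 2 * invLogit κ - 2 * ∫ u, invLogit (κ + u) ∂μ := by
    rw [integral_sub (integrable_const _) hadd, integral_add hi hi',
      integral_const, ← hsym]
    have : IsProbabilityMeasure μ := by infer_instance
    simp only [measure_univ, probReal_univ, ENNReal.toReal_one, smul_eq_mul, one_mul]
    ring
  simp only [add_zero]
  linarith [hint ▸ hpos]

/-- For a logit link with `U ~ N(0, σ²)`, `σ² > 0`, the adjustment `a(κ)`
satisfying `E[h(κ + U + a(κ))] = h(κ)` is positive for `κ > 0`, negative for
`κ < 0`, and zero at `κ = 0`. -/
theorem logit_adjustment_sign (σ2 : NNReal) (hσ : 0 < σ2) (a : ℝ → ℝ)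
    (ha : ∀ κ : ℝ, (∫ u, invLogit (κ + u + a κ) ∂(gaussianReal 0 σ2)) = invLogit κ) :
    (∀ κ : ℝ, 0 < κ → 0 < a κ) ∧ (∀ κ : ℝ, κ < 0 → a κ < 0) ∧ a 0 = 0 := by
  have hσ' : σ2 ≠ 0 := ne_of_gt hσ
  set μ := gaussianReal 0 σ2 with hμ
  -- positive case
  have hpos : ∀ κ : ℝ, 0 < κ → 0 < a κ := by
    intro κ hκ
    by_contra hle
    push_neg at hle
    have h1 : (∫ u, invLogit (κ + u + a κ) ∂μ) ≤ ∫ u, invLogit (κ + u + 0) ∂μ :=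
      (shifted_strictMono κ σ2).monotone hle
    have h2 := mean_lt σ2 hσ' hκ
    rw [ha κ] at h1
    exact absurd (lt_of_le_of_lt h1 h2) (lt_irrefl _)
  refine ⟨hpos, ?_, ?_⟩
  -- negative case via symmetry invLogit (-x) = 1 - invLogit x
  · intro κ hκ
    by_contra hle
    push_neg at hle
    have h1 : (∫ u, invLogit (κ + u + 0) ∂μ) ≤ ∫ u, invLogit (κ + u + a κ) ∂μ :=
      (shifted_strictMono κ σ2).monotone hle
    -- show invLogit κ < ∫ u, invLogit (κ + u) ∂μ
    have hmean := mean_lt σ2 hσ' (show (0:ℝ) < -κ by linarith)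
    have hsym : ∫ u, invLogit (-κ + u + 0) ∂μ
        = 1 - ∫ u, invLogit (κ + u + 0) ∂μ := by
      have hflip : ∫ u, invLogit (-κ + u + 0) ∂μ = ∫ u, invLogit (-κ + -u + 0) ∂μ := by
        have := integral_neg_gaussian σ2 (fun u => invLogit (-κ + u + 0))
          (continuous_invLogit.comp (by continuity))
        exact this.symm
      rw [hflip]
      have heq : ∀ u : ℝ, invLogit (-κ + -u + 0) = 1 - invLogit (κ + u + 0) := by
        intro u
        have := invLogit_neg (κ + u + 0)
        rw [← this]
        ring_nf
      simp only [heq]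
      have hi : Integrable (fun u => invLogit (κ + u + 0)) μ := by
        have := integrable_invLogit_shift κ μ
        simpa [add_comm] using this
      rw [integral_sub (integrable_const _) hi, integral_const]
      have : IsProbabilityMeasure μ := by infer_instance
      simp
    rw [hsym, invLogit_neg] at hmean
    rw [ha κ] at h1
    linarith
  -- zero case
  · have hhalf : ∫ u, invLogit (0 + u + 0) ∂μ = invLogit 0 := by
      have hflip : ∫ u, invLogit (0 + u + 0) ∂μ = ∫ u, invLogit (0 + -u + 0) ∂μ := by
        have := integral_neg_gaussian σ2 (fun u => invLogit (0 + u + 0))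
          (continuous_invLogit.comp (by continuity))
        exact this.symm
      have heq : ∀ u : ℝ, invLogit (0 + -u + 0) = 1 - invLogit (0 + u + 0) := by
        intro u
        have := invLogit_neg (0 + u + 0)
        rw [← this]
        ring_nf
      have hi : Integrable (fun u => invLogit (0 + u + 0)) μ := by
        have := integrable_invLogit_shift 0 μ
        simpa [add_comm] using this
      have h2 : ∫ u, invLogit (0 + u + 0) ∂μ
          = 1 - ∫ u, invLogit (0 + u + 0) ∂μ := by
        conv_lhs => rw [hflip]
        simp only [heq]
        rw [integral_sub (integrable_const _) hi, integral_const]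
        have : IsProbabilityMeasure μ := by infer_instance
        simp
      have h3 : invLogit 0 = 1/2 := by
        unfold invLogit
        norm_num
      rw [h3]
      linarith
    have h0 := ha 0
    rcases lt_trichotomy (a 0) 0 with h | h | h
    · have h2 := shifted_strictMono 0 σ2 h
      simp only [← hμ] at h2
      rw [h0, hhalf] at h2
      exact absurd h2 (lt_irrefl _)
    · exact h
    · have h2 := shifted_strictMono 0 σ2 h
      simp only [← hμ] at h2
      rw [h0, hhalf] at h2
      exact absurd h2 (lt_irrefl _)
end
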